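/- arXiv:2407.15997 — 2 statements merged into one kernel-verified Lean document; each statement's English description precedes it below -/
import Mathlib

section
/- Let Ω ⊆ ℂ^d be open and let 𝒳 be a Hausdorff topological vector space of holomorphic functions on Ω satisfying (P1)–(P3). For w ∈ ℂ^d, the following are equivalent: (1) w ∈ Ω_max; (2) the family ℱ_w = {z_j − w_j : 1 ≤ j ≤ d} is not jointly cyclic; (3) 𝒳 = ℂ1 ⊕ S[ℱ_w] as an algebraic direct sum, i.e., 𝒳 = ℂ1 + S[ℱ_w] and ℂ1 ∩ S[ℱ_w] = {0}. -/
open MvPolynomial in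
lemma sub_C_eval_mem_span {d : ℕ} (w : Fin d → ℂ) (Q : MvPolynomial (Fin d) ℂ) :
    Q - C (eval w Q) ∈ Ideal.span (Set.range fun j => X j - C (w j)) := by
  induction Q using MvPolynomial.induction_on with
  | C a => simp
  | add p q hp hq =>
      have : p + q - C (eval w (p + q)) = (p - C (eval w p)) + (q - C (eval w q)) := by
        rw [map_add, map_add]; ring
      rw [this]; exact Ideal.add_mem _ hp hq
  | mul_X p j hp =>
      have : p * X j - C (eval w (p * X j))
          = p * (X j - C (w j)) + C (w j) * (p - C (eval w p)) := by
        rw [eval_mul, eval_X, map_mul]; ring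
      rw [this]
      exact Ideal.add_mem _ (Ideal.mul_mem_left _ _ (Ideal.subset_span ⟨j, rfl⟩))
        (Ideal.mul_mem_left _ _ hp)



/-!
A Hausdorff topological vector space `X` of holomorphic functions on an open set
`Ω ⊆ ℂ^d` satisfying (P1) (polynomials are dense), (P2) (point evaluations at points
of `Ω` are continuous) and (P3) (the shift operators, and hence multiplication by any
polynomial, are continuous linear self maps).
-/
structure HoloFunSpace (d : ℕ) (Ω : Set (Fin d → ℂ)) (X : Type*)
    [AddCommGroup X] [Module ℂ X] [TopologicalSpace X] where
  /-- The realization of elements of `X` as (holomorphic) functions on `Ω`. -/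
  toFun : X →ₗ[ℂ] ((Fin d → ℂ) → ℂ)
  holo : ∀ F : X, DifferentiableOn ℂ (toFun F) Ω
  inj : ∀ F G : X, Set.EqOn (toFun F) (toFun G) Ω → F = G
  /-- The polynomials, as elements of `X`. -/
  poly : MvPolynomial (Fin d) ℂ →ₗ[ℂ] X
  poly_eval : ∀ (P : MvPolynomial (Fin d) ℂ), ∀ z ∈ Ω,
    toFun (poly P) z = MvPolynomial.eval z P
  /-- (P1): polynomials are dense in `X`. -/
  dense_poly : Dense (Set.range fun P : MvPolynomial (Fin d) ℂ => poly P)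
  /-- (P2): point evaluations at points of `Ω` are continuous. -/
  eval_cont : ∀ z ∈ Ω, Continuous fun F : X => toFun F z
  /-- Multiplication by a polynomial, a continuous linear self map of `X`;
  (P3) is the special case of the shifts `mul (X j)`. -/
  mul : MvPolynomial (Fin d) ℂ → X →L[ℂ] X
  mul_eval : ∀ (P : MvPolynomial (Fin d) ℂ) (F : X), ∀ z ∈ Ω,
    toFun (mul P F) z = MvPolynomial.eval z P * toFun F z

namespace HoloFunSpace

variable {d : ℕ} {Ω : Set (Fin d → ℂ)} {X : Type*}
  [AddCommGroup X] [Module ℂ X] [TopologicalSpace X]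

/-- The maximal domain `Ω_max`: all `w ∈ ℂ^d` such that evaluation at `w`, defined on
polynomials, extends to a continuous linear functional on `X`. -/
def maxDomain (H : HoloFunSpace d Ω X) : Set (Fin d → ℂ) :=
  {w | ∃ Λ : X →L[ℂ] ℂ, ∀ P : MvPolynomial (Fin d) ℂ, Λ (H.poly P) = MvPolynomial.eval w P}

/-- The invariant subspace `S[F]`: the closure of `{P · F : P ∈ 𝒫_d}`. -/
def invSub (H : HoloFunSpace d Ω X) (F : X) : Set X :=
  closure (Set.range fun P : MvPolynomial (Fin d) ℂ => H.mul P F)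

/-- `F` is cyclic if `S[F] = X`. -/
def Cyclic (H : HoloFunSpace d Ω X) (F : X) : Prop := H.invSub F = Set.univ

/-- The joint invariant subspace `S[𝓕]`: the closed linear span of `⋃_{F ∈ 𝓕} S[F]`. -/
def jointInvSub (H : HoloFunSpace d Ω X) (𝓕 : Set X) : Set X :=
  closure (Submodule.span ℂ (⋃ F ∈ 𝓕, H.invSub F) : Set X)

/-- A family `𝓕` is jointly cyclic if `S[𝓕] = X`. -/
def JointlyCyclic (H : HoloFunSpace d Ω X) (𝓕 : Set X) : Prop :=
  H.jointInvSub 𝓕 = Set.univ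

end HoloFunSpace

open HoloFunSpace in
/-- For `w ∈ ℂ^d` the following are equivalent:
(1) `w ∈ Ω_max`; (2) the family `ℱ_w = {z_j - w_j : 1 ≤ j ≤ d}` is not jointly
cyclic; (3) `X = ℂ·1 ⊕ S[ℱ_w]` as an algebraic direct sum, i.e. `X = ℂ·1 + S[ℱ_w]`
and `ℂ·1 ∩ S[ℱ_w] = {0}`.  (The hypothesis `Ω ≠ ∅` is implicit in the paper's
standing assumption that `X` consists of holomorphic functions on a domain, so that
the constant function `1` is a nonzero element of `X`.) -/
theorem mem_maxDomain_tfae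
    {d : ℕ} {Ω : Set (Fin d → ℂ)} {X : Type*}
    [AddCommGroup X] [Module ℂ X] [TopologicalSpace X]
    [IsTopologicalAddGroup X] [ContinuousSMul ℂ X] [T2Space X]
    (hΩ : IsOpen Ω) (hΩne : Ω.Nonempty) (H : HoloFunSpace d Ω X) (w : Fin d → ℂ) :
    (w ∈ H.maxDomain ↔
      ¬ H.JointlyCyclic
        (Set.range fun j : Fin d => H.poly (MvPolynomial.X j - MvPolynomial.C (w j)))) ∧
    (w ∈ H.maxDomain ↔
      ((∀ F : X, ∃ c : ℂ, ∃ G ∈ H.jointInvSub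
          (Set.range fun j : Fin d => H.poly (MvPolynomial.X j - MvPolynomial.C (w j))),
        F = c • H.poly 1 + G) ∧
      {F : X | ∃ c : ℂ, F = c • H.poly 1} ∩ H.jointInvSub
          (Set.range fun j : Fin d => H.poly (MvPolynomial.X j - MvPolynomial.C (w j)))
        = {0})) := by
  classical
  set 𝓕 : Set X :=
    Set.range fun j : Fin d => H.poly (MvPolynomial.X j - MvPolynomial.C (w j)) with h𝓕
  set Msub : Submodule ℂ X :=
    (Submodule.span ℂ (⋃ F ∈ 𝓕, H.invSub F)).topologicalClosure with hMsub
  have hMcoe : H.jointInvSub 𝓕 = (Msub : Set X) := rfl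
  have hMclosed : IsClosed (Msub : Set X) := Submodule.isClosed_topologicalClosure _
  -- mul and poly
  have mul_poly : ∀ P Q : MvPolynomial (Fin d) ℂ, H.mul P (H.poly Q) = H.poly (P * Q) := by
    intro P Q
    apply H.inj
    intro z hz
    rw [H.mul_eval P _ z hz, H.poly_eval Q z hz, H.poly_eval _ z hz, map_mul]
  -- polynomials vanishing at w land in Msub (in fact in the span part)
  have poly_mem : ∀ Q : MvPolynomial (Fin d) ℂ, MvPolynomial.eval w Q = 0 →
      H.poly Q ∈ Submodule.span ℂ (⋃ F ∈ 𝓕, H.invSub F) := by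
    intro Q hQ
    have hQ' : Q ∈ Ideal.span (Set.range fun j => MvPolynomial.X j - MvPolynomial.C (w j)) := by
      have := sub_C_eval_mem_span w Q
      rwa [hQ, map_zero, sub_zero] at this
    obtain ⟨c, hc⟩ := Ideal.mem_span_range_iff_exists_fun.mp hQ'
    have : H.poly Q = ∑ j, H.mul (c j) (H.poly (MvPolynomial.X j - MvPolynomial.C (w j))) := by
      rw [← hc, map_sum]
      exact Finset.sum_congr rfl fun j _ => (mul_poly _ _).symm
    rw [this]
    refine Submodule.sum_mem _ fun j _ => Submodule.subset_span ?_
    refine Set.mem_biUnion ⟨j, rfl⟩ ?_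
    exact subset_closure ⟨c j, rfl⟩
  have poly_one_ne : H.poly 1 ≠ 0 := by
    obtain ⟨z, hz⟩ := hΩne
    intro h
    have h1 := H.poly_eval 1 z hz
    rw [h, map_zero] at h1
    simp at h1
  -- Direction A: w ∈ maxDomain → Λ vanishes on jointInvSub
  have dirA : ∀ Λ : X →L[ℂ] ℂ,
      (∀ P : MvPolynomial (Fin d) ℂ, Λ (H.poly P) = MvPolynomial.eval w P) →
      ∀ F ∈ H.jointInvSub 𝓕, Λ F = 0 := by
    intro Λ hΛ F hF
    have hK : IsClosed {F : X | Λ F = 0} :=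
      isClosed_eq Λ.continuous continuous_const
    have hspan : (Submodule.span ℂ (⋃ F ∈ 𝓕, H.invSub F) : Set X) ⊆ {F : X | Λ F = 0} := by
      have : Submodule.span ℂ (⋃ F ∈ 𝓕, H.invSub F) ≤ LinearMap.ker (Λ : X →ₗ[ℂ] ℂ) := by
        rw [Submodule.span_le]
        rintro F hF
        simp only [Set.mem_iUnion] at hF
        obtain ⟨G, ⟨j, rfl⟩, hFG⟩ := hF
        have hsub : Set.range
            (fun P : MvPolynomial (Fin d) ℂ =>
              H.mul P (H.poly (MvPolynomial.X j - MvPolynomial.C (w j))))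
            ⊆ {F : X | Λ F = 0} := by
          rintro _ ⟨P, rfl⟩
          show Λ (H.mul P (H.poly (MvPolynomial.X j - MvPolynomial.C (w j)))) = 0
          rw [mul_poly, hΛ]
          simp
        have := closure_minimal hsub hK hFG
        exact this
      intro F hF
      exact this hF
    exact closure_minimal hspan hK hF
  -- (1) → ¬(2)
  have A1 : w ∈ H.maxDomain → ¬ H.JointlyCyclic 𝓕 := by
    rintro ⟨Λ, hΛ⟩ hJC
    have h1 : H.poly 1 ∈ H.jointInvSub 𝓕 := by rw [hJC]; trivial
    have := dirA Λ hΛ _ h1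
    rw [hΛ 1] at this
    simp at this
  -- (1) → (3)
  have A3 : w ∈ H.maxDomain →
      ((∀ F : X, ∃ c : ℂ, ∃ G ∈ H.jointInvSub 𝓕, F = c • H.poly 1 + G) ∧
      {F : X | ∃ c : ℂ, F = c • H.poly 1} ∩ H.jointInvSub 𝓕 = {0}) := by
    rintro ⟨Λ, hΛ⟩
    constructor
    · intro F
      refine ⟨Λ F, F - Λ F • H.poly 1, ?_, by abel⟩
      -- the set of F with F - Λ F • poly 1 ∈ M is closed and contains polynomials
      have hC : IsClosed {F : X | F - Λ F • H.poly 1 ∈ H.jointInvSub 𝓕} := by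
        have hcont : Continuous fun F : X => F - Λ F • H.poly 1 :=
          continuous_id.sub (Λ.continuous.smul continuous_const)
        exact (isClosed_closure).preimage hcont
      have hsub : Set.range (fun P : MvPolynomial (Fin d) ℂ => H.poly P)
          ⊆ {F : X | F - Λ F • H.poly 1 ∈ H.jointInvSub 𝓕} := by
        rintro _ ⟨P, rfl⟩
        show H.poly P - Λ (H.poly P) • H.poly 1 ∈ H.jointInvSub 𝓕
        rw [hΛ]
        have : H.poly P - MvPolynomial.eval w P • H.poly 1
            = H.poly (P - MvPolynomial.eval w P • 1) := by
          rw [map_sub, map_smul]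
        rw [this]
        exact subset_closure (poly_mem _ (by simp))
      have : (Set.univ : Set X) ⊆ {F : X | F - Λ F • H.poly 1 ∈ H.jointInvSub 𝓕} := by
        rw [← H.dense_poly.closure_eq]
        exact closure_minimal hsub hC
      exact this (Set.mem_univ F)
    · ext F
      simp only [Set.mem_inter_iff, Set.mem_setOf_eq, Set.mem_singleton_iff]
      constructor
      · rintro ⟨⟨c, rfl⟩, hmem⟩
        have h0 := dirA Λ hΛ _ hmem
        rw [map_smul, hΛ 1] at h0
        have hc : c = 0 := by simpa using h0
        rw [hc, zero_smul]
      · rintro rfl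
        exact ⟨⟨0, by rw [zero_smul]⟩, subset_closure (Submodule.zero_mem _)⟩
  -- ¬(2) → (1)
  have B : ¬ H.JointlyCyclic 𝓕 → w ∈ H.maxDomain := by
    intro hJC
    haveI : IsClosed (Msub : Set X) := hMclosed
    set q : X →ₗ[ℂ] X ⧸ Msub := Msub.mkQ with hq
    have hqcont : Continuous q := Msub.isOpenQuotientMap_mkQ.continuous
    have hone : ∀ P : MvPolynomial (Fin d) ℂ,
        q (H.poly P) = MvPolynomial.eval w P • q (H.poly 1) := by
      intro P
      rw [← map_smul]
      rw [Submodule.mkQ_apply, Submodule.mkQ_apply, Submodule.Quotient.eq]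
      have : H.poly P - MvPolynomial.eval w P • H.poly 1
          = H.poly (P - MvPolynomial.eval w P • 1) := by rw [map_sub, map_smul]
      rw [this]
      exact Submodule.le_topologicalClosure _ (poly_mem _ (by simp))
    -- span of q (poly 1) is everything
    have hspan_top : Submodule.span ℂ {q (H.poly 1)} = ⊤ := by
      haveI : FiniteDimensional ℂ (Submodule.span ℂ {q (H.poly 1)}) :=
        FiniteDimensional.span_singleton ℂ _
      have hcl : IsClosed ((Submodule.span ℂ {q (H.poly 1)}) : Set (X ⧸ Msub)) :=
        Submodule.closed_of_finiteDimensional _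
      have hdense : Dense (q '' Set.range fun P : MvPolynomial (Fin d) ℂ => H.poly P) := by
        have hsurj : Function.Surjective q := Msub.mkQ_surjective
        intro x
        obtain ⟨y, rfl⟩ := hsurj x
        have hy : y ∈ closure (Set.range fun P : MvPolynomial (Fin d) ℂ => H.poly P) :=
          H.dense_poly y
        have := (image_closure_subset_closure_image hqcont) (Set.mem_image_of_mem q hy)
        exact this
      have hsub : (q '' Set.range fun P : MvPolynomial (Fin d) ℂ => H.poly P)
          ⊆ (Submodule.span ℂ {q (H.poly 1)} : Set (X ⧸ Msub)) := by
        rintro _ ⟨_, ⟨P, rfl⟩, rfl⟩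
        show q (H.poly P) ∈ (Submodule.span ℂ {q (H.poly 1)} : Set (X ⧸ Msub))
        rw [hone P]
        exact Submodule.smul_mem _ _ (Submodule.mem_span_singleton_self _)
      have : (Set.univ : Set (X ⧸ Msub)) ⊆ (Submodule.span ℂ {q (H.poly 1)} : Set (X ⧸ Msub)) := by
        rw [← hdense.closure_eq]
        exact closure_minimal hsub hcl
      rw [eq_top_iff]
      intro x _
      exact this (Set.mem_univ x)
    have hq1 : q (H.poly 1) ≠ 0 := by
      intro h0
      apply hJC
      have : ∀ F : X, F ∈ Msub := by
        intro F
        have hF : q F ∈ Submodule.span ℂ {q (H.poly 1)} := hspan_top ▸ Submodule.mem_top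
        rw [h0, Submodule.span_zero_singleton] at hF
        have : q F = 0 := hF
        rwa [hq, Submodule.mkQ_apply, Submodule.Quotient.mk_eq_zero] at this
      show H.jointInvSub 𝓕 = Set.univ
      rw [hMcoe]
      exact Set.eq_univ_of_forall this
    -- linear equiv ℂ ≃ X ⧸ Msub
    set e : ℂ →ₗ[ℂ] X ⧸ Msub := LinearMap.toSpanSingleton ℂ _ (q (H.poly 1)) with he
    have hebij : Function.Bijective e := by
      constructor
      · intro a b hab
        have hab' : (a - b) • q (H.poly 1) = 0 := by
          rw [sub_smul]
          simp only [he, LinearMap.toSpanSingleton_apply] at hab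
          rw [hab, sub_self]
        rcases smul_eq_zero.mp hab' with h | h
        · exact sub_eq_zero.mp h
        · exact absurd h hq1
      · intro x
        have : x ∈ Submodule.span ℂ {q (H.poly 1)} := hspan_top ▸ Submodule.mem_top
        obtain ⟨a, ha⟩ := Submodule.mem_span_singleton.mp this
        exact ⟨a, by simpa [he, LinearMap.toSpanSingleton_apply] using ha⟩
    set e' : ℂ ≃ₗ[ℂ] X ⧸ Msub := LinearEquiv.ofBijective e hebij with he'
    haveI : FiniteDimensional ℂ (X ⧸ Msub) := Module.Finite.equiv e'
    have hℓcont : Continuous (e'.symm : X ⧸ Msub →ₗ[ℂ] ℂ) :=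
      LinearMap.continuous_of_finiteDimensional _
    refine ⟨⟨(e'.symm : X ⧸ Msub →ₗ[ℂ] ℂ) ∘ₗ q, hℓcont.comp hqcont⟩, ?_⟩
    intro P
    show e'.symm (q (H.poly P)) = MvPolynomial.eval w P
    rw [hone, map_smul]
    have : e'.symm (q (H.poly 1)) = 1 := by
      have : e' 1 = q (H.poly 1) := by
        simp [he', he, LinearEquiv.ofBijective_apply, LinearMap.toSpanSingleton_apply]
      rw [← this, LinearEquiv.symm_apply_apply]
    rw [this, smul_eq_mul, mul_one]
  -- (3) → ¬(2)
  have C3 : ((∀ F : X, ∃ c : ℂ, ∃ G ∈ H.jointInvSub 𝓕, F = c • H.poly 1 + G) ∧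
      {F : X | ∃ c : ℂ, F = c • H.poly 1} ∩ H.jointInvSub 𝓕 = {0}) →
      ¬ H.JointlyCyclic 𝓕 := by
    rintro ⟨_, hinter⟩ hJC
    have h1 : H.poly 1 ∈ {F : X | ∃ c : ℂ, F = c • H.poly 1} ∩ H.jointInvSub 𝓕 :=
      ⟨⟨1, (one_smul ℂ _).symm⟩, by rw [hJC]; trivial⟩
    rw [hinter] at h1
    exact poly_one_ne h1
  exact ⟨⟨A1, B⟩, ⟨A3, fun h3 => B (C3 h3)⟩⟩
end

section
/- Let Ω ⊆ ℂ^d be open and let 𝒳 be a Hausdorff topological vector space of holomorphic functions on Ω satisfying (P1)–(P3). Let 𝒬 ⊆ 𝒫_d be a family of polynomials with greatest common divisor 𝔤(𝒬), and write I(𝒬) = 𝔤(𝒬)·𝔦_𝒬 where 𝔦_𝒬 is an ideal of 𝒫_d with 𝔤(𝔦_𝒬) = 1. Then 𝒬 is jointly cyclic in 𝒳 if and only if 𝔤(𝒬) is cyclic in 𝒳 and 𝔦_𝒬 is jointly cyclic in 𝒳. -/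
namespace HoloFunSpace

section Aux

variable {d : ℕ} {Ω : Set (Fin d → ℂ)} {X : Type*}
  [AddCommGroup X] [Module ℂ X] [TopologicalSpace X]
  (H : HoloFunSpace d Ω X)

lemma mul_mul' (P Q : MvPolynomial (Fin d) ℂ) (F : X) :
    H.mul P (H.mul Q F) = H.mul (P * Q) F := by
  apply H.inj
  intro z hz
  rw [H.mul_eval _ _ z hz, H.mul_eval _ _ z hz, H.mul_eval _ _ z hz, map_mul]
  ring

lemma mul_poly' (P Q : MvPolynomial (Fin d) ℂ) :
    H.mul P (H.poly Q) = H.poly (P * Q) := by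
  apply H.inj
  intro z hz
  rw [H.mul_eval _ _ z hz, H.poly_eval _ z hz, H.poly_eval _ z hz, map_mul]

lemma one_mul' (F : X) : H.mul 1 F = F := by
  apply H.inj
  intro z hz
  rw [H.mul_eval _ _ z hz, map_one, one_mul]

lemma zero_mul' (F : X) : H.mul 0 F = 0 := by
  apply H.inj
  intro z hz
  rw [H.mul_eval _ _ z hz, map_zero, zero_mul, map_zero]
  rfl

lemma add_mul' (P Q : MvPolynomial (Fin d) ℂ) (F : X) :
    H.mul (P + Q) F = H.mul P F + H.mul Q F := by
  apply H.inj
  intro z hz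
  have h := congrFun (map_add H.toFun (H.mul P F) (H.mul Q F)) z
  rw [Pi.add_apply] at h
  rw [h, H.mul_eval _ _ z hz, H.mul_eval _ _ z hz, H.mul_eval _ _ z hz, map_add]
  ring

lemma smul_mul' (c : ℂ) (P : MvPolynomial (Fin d) ℂ) (F : X) :
    H.mul (c • P) F = c • H.mul P F := by
  apply H.inj
  intro z hz
  have h := congrFun (map_smul H.toFun c (H.mul P F)) z
  rw [Pi.smul_apply, smul_eq_mul] at h
  rw [h, H.mul_eval _ _ z hz, H.mul_eval _ _ z hz, MvPolynomial.smul_eq_C_mul,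
    map_mul, MvPolynomial.eval_C]
  ring

/-- `{P · F : P ∈ 𝒫_d}` is a submodule. -/
def rangeSub (F : X) : Submodule ℂ X where
  carrier := Set.range fun P : MvPolynomial (Fin d) ℂ => H.mul P F
  add_mem' := by
    rintro _ _ ⟨P, rfl⟩ ⟨Q, rfl⟩
    exact ⟨P + Q, H.add_mul' P Q F⟩
  zero_mem' := ⟨0, H.zero_mul' F⟩
  smul_mem' := by
    rintro c _ ⟨P, rfl⟩
    exact ⟨c • P, H.smul_mul' c P F⟩

variable [IsTopologicalAddGroup X] [ContinuousSMul ℂ X]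

lemma jointInvSub_eq (𝓕 : Set X) :
    H.jointInvSub 𝓕 =
      closure (Submodule.span ℂ
        (⋃ F ∈ 𝓕, Set.range fun P : MvPolynomial (Fin d) ℂ => H.mul P F) : Set X) := by
  unfold jointInvSub invSub
  apply subset_antisymm
  · apply closure_minimal ?_ isClosed_closure
    have hle : Submodule.span ℂ
        (⋃ F ∈ 𝓕, closure (Set.range fun P : MvPolynomial (Fin d) ℂ => H.mul P F)) ≤
        (Submodule.span ℂ
          (⋃ F ∈ 𝓕, Set.range fun P : MvPolynomial (Fin d) ℂ => H.mul P F)).topologicalClosure := by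
      rw [Submodule.span_le]
      intro x hx
      simp only [Set.mem_iUnion] at hx
      obtain ⟨F, hF, hx⟩ := hx
      have h1 : (Set.range fun P : MvPolynomial (Fin d) ℂ => H.mul P F) ⊆
          (Submodule.span ℂ
            (⋃ F ∈ 𝓕, Set.range fun P : MvPolynomial (Fin d) ℂ => H.mul P F) : Set X) := by
        refine subset_trans ?_ Submodule.subset_span
        exact Set.subset_iUnion₂ (s := fun F _ =>
          Set.range fun P : MvPolynomial (Fin d) ℂ => H.mul P F) F hF
      exact closure_mono h1 hx
    exact hle
  · apply closure_mono
    apply Submodule.span_mono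
    exact Set.iUnion₂_mono fun F hF => subset_closure

lemma span_union_eq (𝒮 : Set (MvPolynomial (Fin d) ℂ)) :
    Submodule.span ℂ
      (⋃ F ∈ H.poly '' 𝒮, Set.range fun P : MvPolynomial (Fin d) ℂ => H.mul P F) =
      Submodule.map H.poly ((Ideal.span 𝒮).restrictScalars ℂ) := by
  apply le_antisymm
  · rw [Submodule.span_le]
    intro x hx
    simp only [Set.mem_iUnion, Set.mem_image] at hx
    obtain ⟨F, ⟨Q, hQ, rfl⟩, P, rfl⟩ := hx
    exact ⟨P * Q, Ideal.mul_mem_left _ P (Ideal.subset_span hQ), (H.mul_poly' P Q).symm⟩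
  · rintro x ⟨r, hr, rfl⟩
    simp only [SetLike.mem_coe, Submodule.restrictScalars_mem] at hr
    induction hr using Submodule.span_induction with
    | mem r hrS =>
      apply Submodule.subset_span
      simp only [Set.mem_iUnion, Set.mem_image]
      exact ⟨H.poly r, ⟨r, hrS, rfl⟩, 1, by
        show H.mul 1 (H.poly r) = _
        rw [H.mul_poly', one_mul]⟩
    | zero => rw [map_zero]; exact Submodule.zero_mem _
    | add a b _ _ ha hb => rw [map_add]; exact Submodule.add_mem _ ha hb
    | smul a r _ hr =>
      rw [smul_eq_mul, ← H.mul_poly']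
      have hmap : Submodule.map (H.mul a : X →ₗ[ℂ] X) (Submodule.span ℂ
          (⋃ F ∈ H.poly '' 𝒮, Set.range fun P : MvPolynomial (Fin d) ℂ => H.mul P F)) ≤
          Submodule.span ℂ
          (⋃ F ∈ H.poly '' 𝒮, Set.range fun P : MvPolynomial (Fin d) ℂ => H.mul P F) := by
        rw [Submodule.map_span, Submodule.span_le]
        rintro _ ⟨x, hx, rfl⟩
        simp only [Set.mem_iUnion] at hx
        obtain ⟨F, hF, P, rfl⟩ := hx
        apply Submodule.subset_span
        simp only [Set.mem_iUnion]
        exact ⟨F, hF, a * P, by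
          show H.mul (a * P) F = _
          exact (H.mul_mul' a P F).symm⟩
      exact hmap ⟨H.poly r, hr, rfl⟩

lemma jointInvSub_poly_eq (𝒮 : Set (MvPolynomial (Fin d) ℂ)) :
    H.jointInvSub (H.poly '' 𝒮) =
      closure (H.poly '' (Ideal.span 𝒮 : Set (MvPolynomial (Fin d) ℂ))) := by
  rw [H.jointInvSub_eq, H.span_union_eq]
  rfl

end Aux

end HoloFunSpace

open HoloFunSpace in
/-- Let `𝒬 ⊆ 𝒫_d` be a family of polynomials, let `g = 𝔤(𝒬)` be a
greatest common divisor of `𝒬`, and write `I(𝒬) = g · 𝔦` where `𝔦` is an ideal of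
`𝒫_d` with `𝔤(𝔦) = 1` (i.e. any common divisor of `𝔦` is a unit).  Then `𝒬` is
jointly cyclic if and only if `g` is cyclic and `𝔦` is jointly cyclic. -/
theorem jointlyCyclic_iff_gcd_cyclic_and_ideal_jointlyCyclic
    {d : ℕ} {Ω : Set (Fin d → ℂ)} {X : Type*}
    [AddCommGroup X] [Module ℂ X] [TopologicalSpace X]
    [IsTopologicalAddGroup X] [ContinuousSMul ℂ X] [T2Space X]
    (hΩ : IsOpen Ω) (H : HoloFunSpace d Ω X)
    (𝒬 : Set (MvPolynomial (Fin d) ℂ)) (g : MvPolynomial (Fin d) ℂ)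
    (hg_dvd : ∀ P ∈ 𝒬, g ∣ P)
    (hg_gcd : ∀ q : MvPolynomial (Fin d) ℂ, (∀ P ∈ 𝒬, q ∣ P) → q ∣ g)
    (𝔦 : Ideal (MvPolynomial (Fin d) ℂ))
    (h𝔦 : Ideal.span 𝒬 = Ideal.span {g} * 𝔦)
    (h𝔦gcd : ∀ q : MvPolynomial (Fin d) ℂ, (∀ P ∈ 𝔦, q ∣ P) → IsUnit q) :
    H.JointlyCyclic (H.poly '' 𝒬) ↔
      (H.Cyclic (H.poly g) ∧
        H.JointlyCyclic (H.poly '' (𝔦 : Set (MvPolynomial (Fin d) ℂ)))) := by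
  have hQeq := H.jointInvSub_poly_eq 𝒬
  have hieq := H.jointInvSub_poly_eq (𝔦 : Set (MvPolynomial (Fin d) ℂ))
  rw [Ideal.span_eq] at hieq
  constructor
  · intro hQ
    rw [JointlyCyclic, hQeq] at hQ
    constructor
    · -- `g` is cyclic
      have hsub : H.poly '' (Ideal.span 𝒬 : Set (MvPolynomial (Fin d) ℂ)) ⊆
          Set.range fun P : MvPolynomial (Fin d) ℂ => H.mul P (H.poly g) := by
        rintro _ ⟨r, hr, rfl⟩
        have hgr : g ∣ r := by
          have : r ∈ Ideal.span {g} := by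
            have h1 : Ideal.span 𝒬 ≤ Ideal.span {g} := h𝔦 ▸ Ideal.mul_le_left
            exact h1 hr
          exact (Ideal.mem_span_singleton).mp this
        obtain ⟨c, rfl⟩ := hgr
        exact ⟨c, by show H.mul c (H.poly g) = _; rw [H.mul_poly', mul_comm]⟩
      rw [Cyclic, invSub]
      apply Set.eq_univ_of_univ_subset
      rw [← hQ]
      exact closure_mono hsub
    · -- `𝔦` is jointly cyclic
      have hle : Ideal.span 𝒬 ≤ 𝔦 := h𝔦 ▸ Ideal.mul_le_right
      rw [JointlyCyclic, hieq]
      apply Set.eq_univ_of_univ_subset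
      rw [← hQ]
      exact closure_mono (Set.image_mono hle)
  · rintro ⟨hg, hi⟩
    rw [JointlyCyclic, hieq] at hi
    rw [Cyclic, invSub] at hg
    rw [JointlyCyclic, hQeq]
    have key : (Set.range fun P : MvPolynomial (Fin d) ℂ => H.mul P (H.poly g)) ⊆
        closure (H.poly '' (Ideal.span 𝒬 : Set (MvPolynomial (Fin d) ℂ))) := by
      rintro _ ⟨P, rfl⟩
      have hP : H.poly P ∈
          closure (H.poly '' (𝔦 : Set (MvPolynomial (Fin d) ℂ))) := by
        rw [hi]; trivial
      have hmapsto : Set.MapsTo (H.mul g) (H.poly '' (𝔦 : Set (MvPolynomial (Fin d) ℂ)))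
          (H.poly '' (Ideal.span 𝒬 : Set (MvPolynomial (Fin d) ℂ))) := by
        rintro _ ⟨s, hs, rfl⟩
        refine ⟨g * s, ?_, (H.mul_poly' g s).symm⟩
        rw [h𝔦]
        exact Ideal.mul_mem_mul (Ideal.subset_span rfl) hs
      have h1 := map_mem_closure (H.mul g).continuous hP hmapsto
      have h2 : H.mul P (H.poly g) = H.mul g (H.poly P) := by
        rw [H.mul_poly', H.mul_poly', mul_comm]
      show H.mul P (H.poly g) ∈ _
      rw [h2]
      exact h1
    apply Set.eq_univ_of_univ_subset
    rw [← hg]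
    exact closure_minimal key isClosed_closure
end
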